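/- arXiv:2003.03066 — 3 statements merged into one kernel-verified Lean document; each statement's English description precedes it below -/
import Mathlib

section
/- A finite set D of nonzero vectors in ℝⁿ with positive cosine measure κ(D) > 0 is a positive spanning set: every vector v ∈ ℝⁿ can be written as a nonnegative linear combination of elements of D. -/
open scoped RealInnerProductSpace

/-- Cosine measure of a nonempty finite set of vectors:
`κ(D) = inf over unit vectors v of max_{d ∈ D} ⟪v, d⟫ / ‖d‖`. -/
noncomputable def cosineMeasure {n : ℕ} (D : Finset (EuclideanSpace ℝ (Fin n)))
    (hD : D.Nonempty) : ℝ :=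
  ⨅ v : Metric.sphere (0 : EuclideanSpace ℝ (Fin n)) 1,
    D.sup' hD fun d => ⟪(v : EuclideanSpace ℝ (Fin n)), d⟫ / ‖d‖

theorem stmt_10 {n : ℕ} (D : Finset (EuclideanSpace ℝ (Fin n)))
    (hD : D.Nonempty) (hD0 : ∀ d ∈ D, d ≠ 0)
    (hκ : 0 < cosineMeasure D hD) :
    ∀ v : EuclideanSpace ℝ (Fin n), ∃ c : EuclideanSpace ℝ (Fin n) → ℝ,
      (∀ d ∈ D, 0 ≤ c d) ∧ v = ∑ d ∈ D, c d • d := by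
  classical
  obtain ⟨d₀, hd₀⟩ := id hD
  -- n = 0 is impossible
  rcases Nat.eq_zero_or_pos n with hn | hn
  · subst hn
    exact absurd (Subsingleton.elim d₀ 0) (hD0 d₀ hd₀)
  set κ := cosineMeasure D hD with hκdef
  -- a unit vector exists
  have hsph : ∃ u : EuclideanSpace ℝ (Fin n), ‖u‖ = 1 := by
    refine ⟨EuclideanSpace.single (⟨0, hn⟩ : Fin n) (1 : ℝ), ?_⟩
    rw [EuclideanSpace.norm_single]; exact norm_one
  -- range of the sup' function over the sphere is bounded below by -1
  have hbdd : BddBelow (Set.range fun v : Metric.sphere (0 : EuclideanSpace ℝ (Fin n)) 1 =>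
      D.sup' hD fun d => ⟪(v : EuclideanSpace ℝ (Fin n)), d⟫ / ‖d‖) := by
    refine ⟨-1, ?_⟩
    rintro x ⟨v, rfl⟩
    have hv : ‖(v : EuclideanSpace ℝ (Fin n))‖ = 1 := by
      have := v.2; simpa [Metric.mem_sphere, dist_eq_norm] using this
    refine le_trans ?_ (Finset.le_sup' (fun d => ⟪(v : EuclideanSpace ℝ (Fin n)), d⟫ / ‖d‖) hd₀)
    have hd0n : (0:ℝ) < ‖d₀‖ := norm_pos_iff.mpr (hD0 d₀ hd₀)
    rw [le_div_iff₀ hd0n]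
    have := abs_real_inner_le_norm (v : EuclideanSpace ℝ (Fin n)) d₀
    rw [hv, one_mul] at this
    have h1 := neg_abs_le ⟪(v : EuclideanSpace ℝ (Fin n)), d₀⟫
    nlinarith [abs_nonneg ⟪(v : EuclideanSpace ℝ (Fin n)), d₀⟫]
  -- key: for every w there is d ∈ D with κ * ‖w‖ * ‖d‖ ≤ ⟪w, d⟫
  have hstep : ∀ w : EuclideanSpace ℝ (Fin n), ∃ d ∈ D, κ * ‖w‖ * ‖d‖ ≤ ⟪w, d⟫ := by
    intro w
    rcases eq_or_ne w 0 with rfl | hw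
    · exact ⟨d₀, hd₀, by simp⟩
    have hwn : (0:ℝ) < ‖w‖ := norm_pos_iff.mpr hw
    set u : EuclideanSpace ℝ (Fin n) := ‖w‖⁻¹ • w with hu
    have hun : ‖u‖ = 1 := by
      rw [hu, norm_smul, norm_inv, norm_norm, inv_mul_cancel₀ hwn.ne']
    have humem : u ∈ Metric.sphere (0 : EuclideanSpace ℝ (Fin n)) 1 := by
      simpa [Metric.mem_sphere, dist_eq_norm] using hun
    have hle : κ ≤ D.sup' hD fun d => ⟪u, d⟫ / ‖d‖ :=
      ciInf_le hbdd (⟨u, humem⟩ : Metric.sphere (0 : EuclideanSpace ℝ (Fin n)) 1)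
    obtain ⟨d, hd, hdeq⟩ := Finset.exists_mem_eq_sup' hD (fun d => ⟪u, d⟫ / ‖d‖)
    refine ⟨d, hd, ?_⟩
    rw [hdeq] at hle
    have hdn : (0:ℝ) < ‖d‖ := norm_pos_iff.mpr (hD0 d hd)
    have hinner : ⟪u, d⟫ = ‖w‖⁻¹ * ⟪w, d⟫ := real_inner_smul_left w d _
    rw [hinner] at hle
    rw [le_div_iff₀ hdn] at hle
    have := mul_le_mul_of_nonneg_left hle hwn.le
    calc κ * ‖w‖ * ‖d‖ = ‖w‖ * (κ * ‖d‖) := by ring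
    _ ≤ ‖w‖ * (‖w‖⁻¹ * ⟪w, d⟫) := this
    _ = ⟪w, d⟫ := by field_simp
  have hκ0 : (0:ℝ) < κ := hκ
  -- κ ≤ 1
  have hκ1 : κ ≤ 1 := by
    obtain ⟨u, hun⟩ := hsph
    have humem : u ∈ Metric.sphere (0 : EuclideanSpace ℝ (Fin n)) 1 := by
      simpa [Metric.mem_sphere, dist_eq_norm] using hun
    refine le_trans (ciInf_le hbdd (⟨u, humem⟩ : Metric.sphere (0 : EuclideanSpace ℝ (Fin n)) 1)) ?_
    refine Finset.sup'_le hD _ fun d hd => ?_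
    have hdn : (0:ℝ) < ‖d‖ := norm_pos_iff.mpr (hD0 d hd)
    rw [div_le_one hdn]
    have := real_inner_le_norm u d
    rw [hun, one_mul] at this
    exact this
  -- the nonnegative cone generated by D
  set C : Set (EuclideanSpace ℝ (Fin n)) := {x | ∃ c : EuclideanSpace ℝ (Fin n) → ℝ, (∀ d ∈ D, 0 ≤ c d) ∧ x = ∑ d ∈ D, c d • d} with hC
  have hzero : (0 : EuclideanSpace ℝ (Fin n)) ∈ C := ⟨0, fun _ _ => le_refl 0, by simp⟩
  have hadd : ∀ x ∈ C, ∀ y ∈ C, x + y ∈ C := by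
    rintro x ⟨c, hc, rfl⟩ y ⟨c', hc', rfl⟩
    refine ⟨c + c', fun d hd => add_nonneg (hc d hd) (hc' d hd), ?_⟩
    rw [← Finset.sum_add_distrib]
    simp [add_smul]
  have hsmul : ∀ t : ℝ, 0 ≤ t → ∀ x ∈ C, t • x ∈ C := by
    rintro t ht x ⟨c, hc, rfl⟩
    refine ⟨fun d => t * c d, fun d hd => mul_nonneg ht (hc d hd), ?_⟩
    rw [Finset.smul_sum]
    simp [smul_smul]
  have hmemD : ∀ d ∈ D, ∀ t : ℝ, 0 ≤ t → t • d ∈ C := by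
    intro d hd t ht
    refine ⟨fun e => if e = d then t else 0, fun e he => by positivity, ?_⟩
    rw [show (∑ e ∈ D, (if e = d then t else 0) • e) = ∑ e ∈ D, (if e = d then t • e else 0) by
        simp [ite_smul],
      Finset.sum_ite_eq' D d (fun e => t • e), if_pos hd]
  have hconv : Convex ℝ C := by
    intro x hx y hy a b ha hb hab
    exact hadd _ (hsmul a ha x hx) _ (hsmul b hb y hy)
  -- density: iterate
  have hiter : ∀ v : EuclideanSpace ℝ (Fin n), ∀ k : ℕ, ∃ w : EuclideanSpace ℝ (Fin n), v - w ∈ C ∧ ‖w‖^2 ≤ (1 - κ^2)^k * ‖v‖^2 := by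
    intro v k
    induction k with
    | zero => exact ⟨v, by simpa using hzero, by simp⟩
    | succ k ih =>
      obtain ⟨w, hwC, hwn⟩ := ih
      obtain ⟨d, hd, hwd⟩ := hstep w
      have hdn : (0:ℝ) < ‖d‖ := norm_pos_iff.mpr (hD0 d hd)
      set t : ℝ := ⟪w, d⟫ / ‖d‖^2 with hT
      have ht0 : 0 ≤ t := by
        apply div_nonneg _ (by positivity)
        nlinarith [hwd, mul_nonneg (mul_nonneg hκ0.le (norm_nonneg w)) (norm_nonneg d)]
      refine ⟨w - t • d, ?_, ?_⟩
      · have : v - (w - t • d) = (v - w) + t • d := by abel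
        rw [this]
        exact hadd _ hwC _ (hmemD d hd t ht0)
      · have hexp : ‖w - t • d‖^2 = ‖w‖^2 - ⟪w, d⟫^2 / ‖d‖^2 := by
          rw [norm_sub_sq_real, real_inner_smul_right, norm_smul, mul_pow]
          rw [hT]
          rw [Real.norm_eq_abs, sq_abs]
          field_simp
          ring
        rw [hexp]
        have h1 : κ^2 * ‖w‖^2 * ‖d‖^2 ≤ ⟪w, d⟫^2 := by
          have h0 : 0 ≤ κ * ‖w‖ * ‖d‖ := by positivity
          nlinarith
        have h2 : κ^2 * ‖w‖^2 ≤ ⟪w, d⟫^2 / ‖d‖^2 := by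
          rw [le_div_iff₀ (by positivity)]
          linarith
        have h3 : ‖w‖^2 - ⟪w, d⟫^2 / ‖d‖^2 ≤ (1 - κ^2) * ‖w‖^2 := by linarith
        refine h3.trans ?_
        have hfac : (0:ℝ) ≤ 1 - κ^2 := by nlinarith
        calc (1 - κ^2) * ‖w‖^2 ≤ (1 - κ^2) * ((1-κ^2)^k * ‖v‖^2) :=
              mul_le_mul_of_nonneg_left hwn hfac
        _ = (1 - κ^2)^(k+1) * ‖v‖^2 := by ring
  -- closure of C is everything
  have hdense : ∀ v : EuclideanSpace ℝ (Fin n), v ∈ closure C := by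
    intro v
    choose w hwC hwn using hiter v
    have hr0 : (0:ℝ) ≤ 1 - κ^2 := by nlinarith
    have hr1 : 1 - κ^2 < 1 := by nlinarith
    have htend : Filter.Tendsto (fun k => ‖w k‖^2) Filter.atTop (nhds 0) := by
      have h1 : Filter.Tendsto (fun k : ℕ => (1 - κ^2)^k * ‖v‖^2) Filter.atTop (nhds 0) := by
        have := (tendsto_pow_atTop_nhds_zero_of_lt_one hr0 hr1).mul_const (‖v‖^2)
        simpa using this
      exact squeeze_zero (fun k => by positivity) hwn h1
    have htw : Filter.Tendsto w Filter.atTop (nhds 0) := by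
      rw [tendsto_zero_iff_norm_tendsto_zero]
      have := htend.sqrt
      simpa [Real.sqrt_sq (norm_nonneg _)] using this
    have : Filter.Tendsto (fun k => v - w k) Filter.atTop (nhds v) := by
      simpa using (tendsto_const_nhds.sub htw)
    exact mem_closure_of_tendsto this (Filter.Eventually.of_forall fun k => hwC k)
  have hclos : closure C = Set.univ := Set.eq_univ_of_forall hdense
  -- affine span is everything, so interior nonempty
  have hspan : affineSpan ℝ C = ⊤ := by
    have hsub : closure C ⊆ (affineSpan ℝ C : Set (EuclideanSpace ℝ (Fin n))) := by
      apply closure_minimal (subset_affineSpan ℝ C)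
      exact (affineSpan ℝ C).closed_of_finiteDimensional
    rw [hclos] at hsub
    rw [← AffineSubspace.coe_eq_univ_iff]
    exact Set.eq_univ_of_univ_subset hsub
  have hint : (interior C).Nonempty := by
    rw [hconv.interior_nonempty_iff_affineSpan_eq_top]
    exact hspan
  obtain ⟨x, hx⟩ := hint
  -- every v is in C
  intro v
  have hv2 : (2:ℝ) • v - x ∈ closure C := by rw [hclos]; trivial
  have hmid : v ∈ interior C := by
    have := hconv.combo_interior_closure_mem_interior hx hv2
      (by norm_num : (0:ℝ) < 1/2) (by norm_num : (0:ℝ) ≤ 1/2) (by norm_num)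
    have heq : (1/2 : ℝ) • x + (1/2 : ℝ) • ((2:ℝ) • v - x) = v := by
      rw [smul_sub, smul_smul]
      norm_num
    rwa [heq] at this
  have hvC : v ∈ C := interior_subset hmid
  exact hvC
end

section
/- Let f : ℝⁿ → ℝ be differentiable with L-Lipschitz gradient, let D ⊂ ℝⁿ be a finite set of nonzero vectors with cosine measure κ(D) ≥ κ_min > 0 and d_min ≤ ‖d‖ ≤ d_max for all d ∈ D. Let c > 0, ε_f > 0, γ > 2, p > 1, δ ∈ (0,1), and x ∈ ℝⁿ. Suppose that for every d ∈ D, f(x + δd) - f(x) + (γ+2) c ε_f δ^p ≥ 0. Then ‖∇f(x)‖ ≤ κ_min⁻¹ (L d_max + (γ+2) c ε_f d_min⁻¹) · δ^{min(p-1, 1)}. -/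
set_option maxHeartbeats 1000000


open scoped RealInnerProductSpace

/-- Descent-type estimate from Lipschitz gradient (with constant `L` instead of `L/2`). -/
lemma descent_aux {n : ℕ} (f : EuclideanSpace ℝ (Fin n) → ℝ) (L : ℝ)
    (hdiff : Differentiable ℝ f)
    (hlip : ∀ x y : EuclideanSpace ℝ (Fin n),
      ‖gradient f x - gradient f y‖ ≤ L * ‖x - y‖)
    (x d : EuclideanSpace ℝ (Fin n)) (δ : ℝ) (hδ0 : 0 < δ) :
    f (x + δ • d) - f x - δ * ⟪gradient f x, d⟫ ≤ L * δ * ‖d‖ ^ 2 * δ := by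
  set g := gradient f x with hg
  set ψ : ℝ → ℝ := fun t => f (x + t • d) - t * ⟪g, d⟫ with hψ
  have hderiv : ∀ t : ℝ, HasDerivAt ψ (⟪gradient f (x + t • d), d⟫ - ⟪g, d⟫) t := by
    intro t
    have hc : HasDerivAt (fun t : ℝ => x + t • d) d t := by
      simpa using ((hasDerivAt_id t).smul_const d).const_add x
    have hF : HasFDerivAt f
        ((InnerProductSpace.toDual ℝ (EuclideanSpace ℝ (Fin n)))
          (gradient f (x + t • d))) (x + t • d) := by
      have := ((hdiff (x + t • d)).hasGradientAt)
      rwa [hasGradientAt_iff_hasFDerivAt] at this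
    have h1 : HasDerivAt (fun t : ℝ => f (x + t • d))
        ⟪gradient f (x + t • d), d⟫ t := by
      exact (hF.comp_hasDerivAt t hc).congr_deriv (by simp)
    exact h1.sub (((hasDerivAt_id t).mul_const ⟪g, d⟫).congr_deriv (one_mul _))
  have hbound : ∀ t ∈ Set.Ico (0 : ℝ) δ,
      ‖⟪gradient f (x + t • d), d⟫ - ⟪g, d⟫‖ ≤ L * δ * ‖d‖ ^ 2 := by
    intro t ht
    have h1 : ⟪gradient f (x + t • d), d⟫ - ⟪g, d⟫
        = ⟪gradient f (x + t • d) - g, d⟫ := by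
      rw [inner_sub_left]
    rw [h1]
    have h2 : ‖⟪gradient f (x + t • d) - g, d⟫‖
        ≤ ‖gradient f (x + t • d) - g‖ * ‖d‖ := norm_inner_le_norm _ _
    have h3 : ‖gradient f (x + t • d) - g‖ ≤ L * ‖t • d‖ := by
      simpa using hlip (x + t • d) x
    have h4 : ‖t • d‖ = t * ‖d‖ := by
      rw [norm_smul, Real.norm_eq_abs, abs_of_nonneg ht.1]
    have hL : 0 ≤ L * ‖d‖ := by
      have := hlip (x + d) x
      simpa using this.trans' (norm_nonneg _)
    have h5 : L * (t * ‖d‖) ≤ L * (δ * ‖d‖) := by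
      rcases le_or_gt 0 L with hL0 | hL0
      · nlinarith [ht.2, ht.1, norm_nonneg d]
      · have hd0 : ‖d‖ = 0 := by nlinarith [norm_nonneg d]
        simp [hd0]
    calc ‖⟪gradient f (x + t • d) - g, d⟫‖ ≤ L * ‖t • d‖ * ‖d‖ := by
          exact h2.trans (by nlinarith [norm_nonneg d, norm_nonneg (gradient f (x + t • d) - g)])
      _ ≤ L * δ * ‖d‖ ^ 2 := by rw [h4]; nlinarith [norm_nonneg d]
  have := norm_image_sub_le_of_norm_deriv_le_segment'
    (f := ψ) (f' := fun t => ⟪gradient f (x + t • d), d⟫ - ⟪g, d⟫)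
    (a := 0) (b := δ) (C := L * δ * ‖d‖ ^ 2)
    (fun t _ => (hderiv t).hasDerivWithinAt) hbound δ (by constructor <;> [exact hδ0.le; rfl])
  have hψδ : ψ δ - ψ 0 = f (x + δ • d) - f x - δ * ⟪g, d⟫ := by
    simp [hψ]; ring
  rw [hψδ] at this
  calc f (x + δ • d) - f x - δ * ⟪g, d⟫ ≤ |f (x + δ • d) - f x - δ * ⟪g, d⟫| := le_abs_self _
    _ ≤ L * δ * ‖d‖ ^ 2 * (δ - 0) := by simpa [Real.norm_eq_abs] using this
    _ = L * δ * ‖d‖ ^ 2 * δ := by ring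

theorem stmt_11 {n : ℕ} (f : EuclideanSpace ℝ (Fin n) → ℝ) (L : ℝ)
    (hdiff : Differentiable ℝ f)
    (hlip : ∀ x y : EuclideanSpace ℝ (Fin n),
      ‖gradient f x - gradient f y‖ ≤ L * ‖x - y‖)
    (D : Finset (EuclideanSpace ℝ (Fin n))) (hD : D.Nonempty)
    (hD0 : ∀ d ∈ D, d ≠ 0)
    (κmin dmin dmax : ℝ) (hκmin : 0 < κmin)
    (hκ : κmin ≤ cosineMeasure D hD)
    (hdmin : 0 < dmin)
    (hnorm : ∀ d ∈ D, dmin ≤ ‖d‖ ∧ ‖d‖ ≤ dmax)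
    (c εf γ p δ : ℝ) (hc : 0 < c) (hεf : 0 < εf) (hγ : 2 < γ) (hp : 1 < p)
    (hδ0 : 0 < δ) (hδ1 : δ < 1)
    (x : EuclideanSpace ℝ (Fin n))
    (hfail : ∀ d ∈ D, f (x + δ • d) - f x + (γ + 2) * c * εf * δ ^ p ≥ 0) :
    ‖gradient f x‖ ≤
      κmin⁻¹ * (L * dmax + (γ + 2) * c * εf * dmin⁻¹) * δ ^ min (p - 1) 1 := by
  obtain ⟨d₀, hd₀⟩ := hD
  have hd₀n : 0 < ‖d₀‖ := norm_pos_iff.mpr (hD0 d₀ hd₀)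
  -- L ≥ 0
  have hL : 0 ≤ L := by
    have h := (hlip (x + d₀) x).trans' (norm_nonneg _)
    simp only [add_sub_cancel_left] at h
    nlinarith
  have hdmax : 0 < dmax := lt_of_lt_of_le hdmin (le_trans (hnorm d₀ hd₀).1 (hnorm d₀ hd₀).2)
  set m := δ ^ min (p - 1) 1 with hm
  have hmpos : 0 < m := Real.rpow_pos_of_pos hδ0 _
  have hδm : δ ≤ m := by
    have := Real.rpow_le_rpow_of_exponent_ge hδ0 hδ1.le (min_le_right (p - 1) 1)
    simpa using this
  have hp1m : δ ^ (p - 1) ≤ m :=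
    Real.rpow_le_rpow_of_exponent_ge hδ0 hδ1.le (min_le_left (p - 1) 1)
  set g := gradient f x with hg
  by_cases hg0 : g = 0
  · rw [hg0]
    simp only [norm_zero]
    positivity
  have hgn : 0 < ‖g‖ := norm_pos_iff.mpr hg0
  -- the unit vector -g/‖g‖
  set v : EuclideanSpace ℝ (Fin n) := (-‖g‖⁻¹) • g with hv
  have hvnorm : ‖v‖ = 1 := by
    rw [hv, norm_smul, Real.norm_eq_abs, abs_neg, abs_of_nonneg (inv_nonneg.mpr hgn.le),
      inv_mul_cancel₀ hgn.ne']
  have hvmem : v ∈ Metric.sphere (0 : EuclideanSpace ℝ (Fin n)) 1 := by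
    simpa [mem_sphere_iff_norm] using hvnorm
  -- the infimum is at most the value at v
  have hbdd : BddBelow (Set.range fun u : Metric.sphere (0 : EuclideanSpace ℝ (Fin n)) 1 =>
      D.sup' ⟨d₀, hd₀⟩ fun d => ⟪(u : EuclideanSpace ℝ (Fin n)), d⟫ / ‖d‖) := by
    refine ⟨-1, ?_⟩
    rintro _ ⟨u, rfl⟩
    have hun : ‖(u : EuclideanSpace ℝ (Fin n))‖ = 1 := by
      have := u.2
      simpa [mem_sphere_iff_norm] using this
    refine le_trans ?_ (Finset.le_sup' _ hd₀)
    have h1 : -(‖(u : EuclideanSpace ℝ (Fin n))‖ * ‖d₀‖)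
        ≤ ⟪(u : EuclideanSpace ℝ (Fin n)), d₀⟫ := neg_le_of_abs_le (abs_real_inner_le_norm _ _)
    rw [hun, one_mul] at h1
    rw [le_div_iff₀ hd₀n]
    linarith
  have hinf : cosineMeasure D ⟨d₀, hd₀⟩ ≤
      D.sup' ⟨d₀, hd₀⟩ fun d => ⟪v, d⟫ / ‖d‖ := by
    exact ciInf_le hbdd (⟨v, hvmem⟩ : Metric.sphere (0 : EuclideanSpace ℝ (Fin n)) 1)
  have hκ' : κmin ≤ D.sup' ⟨d₀, hd₀⟩ fun d => ⟪v, d⟫ / ‖d‖ := le_trans hκ hinf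
  obtain ⟨ds, hds, hsup⟩ := Finset.exists_mem_eq_sup' (⟨d₀, hd₀⟩ : D.Nonempty)
    (fun d => ⟪v, d⟫ / ‖d‖)
  rw [hsup] at hκ'
  have hdsn : 0 < ‖ds‖ := norm_pos_iff.mpr (hD0 ds hds)
  -- κmin ‖g‖ ‖ds‖ ≤ -⟪g, ds⟫
  have hinner : κmin * ‖g‖ * ‖ds‖ ≤ -⟪g, ds⟫ := by
    have h1 : ⟪v, ds⟫ = -‖g‖⁻¹ * ⟪g, ds⟫ := by
      rw [hv, real_inner_smul_left]
    rw [le_div_iff₀ hdsn, h1] at hκ'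
    have h2 := mul_le_mul_of_nonneg_left hκ' hgn.le
    rw [show ‖g‖ * (-‖g‖⁻¹ * ⟪g, ds⟫) = -(‖g‖ * ‖g‖⁻¹) * ⟪g, ds⟫ by ring,
      mul_inv_cancel₀ hgn.ne'] at h2
    nlinarith
  -- descent estimate
  have hdesc := descent_aux f L hdiff hlip x ds δ hδ0
  rw [← hg] at hdesc
  have hfs := hfail ds hds
  -- key inequality
  have hkey : κmin * ‖g‖ * (δ * ‖ds‖) ≤ L * δ ^ 2 * ‖ds‖ ^ 2 + (γ + 2) * c * εf * δ ^ p := by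
    have h3 := mul_le_mul_of_nonneg_left hinner hδ0.le
    nlinarith
  -- bound the two rhs terms
  have hds1 := (hnorm ds hds).1
  have hds2 := (hnorm ds hds).2
  have hδp : δ ^ (p - 1) * δ = δ ^ p := by
    rw [Real.rpow_sub hδ0, Real.rpow_one]
    field_simp
  have e1 : L * δ ^ 2 * ‖ds‖ ^ 2 ≤ L * dmax * m * (δ * ‖ds‖) := by
    have t1 : δ * ‖ds‖ ≤ m * dmax :=
      mul_le_mul hδm hds2 (norm_nonneg _) hmpos.le
    have t2 : L * (δ * ‖ds‖) * (δ * ‖ds‖) ≤ L * (m * dmax) * (δ * ‖ds‖) :=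
      mul_le_mul_of_nonneg_right (mul_le_mul_of_nonneg_left t1 hL) (by positivity)
    calc L * δ ^ 2 * ‖ds‖ ^ 2 = L * (δ * ‖ds‖) * (δ * ‖ds‖) := by ring
      _ ≤ L * (m * dmax) * (δ * ‖ds‖) := t2
      _ = L * dmax * m * (δ * ‖ds‖) := by ring
  have e2 : (γ + 2) * c * εf * δ ^ p ≤ (γ + 2) * c * εf * dmin⁻¹ * m * (δ * ‖ds‖) := by
    have hC : 0 < (γ + 2) * c * εf := by positivity
    rw [← hδp]
    have h4 : δ ^ (p - 1) * δ ≤ m * δ := by nlinarith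
    have h5 : (1 : ℝ) ≤ dmin⁻¹ * ‖ds‖ := by
      rw [← inv_mul_cancel₀ hdmin.ne']
      exact mul_le_mul_of_nonneg_left hds1 (inv_nonneg.mpr hdmin.le)
    have h6 : m * δ ≤ dmin⁻¹ * ‖ds‖ * (m * δ) := le_mul_of_one_le_left (by positivity) h5
    calc (γ + 2) * c * εf * (δ ^ (p - 1) * δ) ≤ (γ + 2) * c * εf * (m * δ) := by
          exact mul_le_mul_of_nonneg_left h4 hC.le
      _ ≤ (γ + 2) * c * εf * (dmin⁻¹ * ‖ds‖ * (m * δ)) := mul_le_mul_of_nonneg_left h6 hC.le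
      _ = (γ + 2) * c * εf * dmin⁻¹ * m * (δ * ‖ds‖) := by ring
  have hfinal : κmin * ‖g‖ * (δ * ‖ds‖) ≤
      (L * dmax + (γ + 2) * c * εf * dmin⁻¹) * m * (δ * ‖ds‖) := by
    calc κmin * ‖g‖ * (δ * ‖ds‖) ≤ L * δ ^ 2 * ‖ds‖ ^ 2 + (γ + 2) * c * εf * δ ^ p := hkey
      _ ≤ L * dmax * m * (δ * ‖ds‖) + (γ + 2) * c * εf * dmin⁻¹ * m * (δ * ‖ds‖) := by
          linarith
      _ = (L * dmax + (γ + 2) * c * εf * dmin⁻¹) * m * (δ * ‖ds‖) := by ring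
  have hcancel : κmin * ‖g‖ ≤ (L * dmax + (γ + 2) * c * εf * dmin⁻¹) * m :=
    le_of_mul_le_mul_right hfinal (by positivity)
  calc ‖g‖ = κmin⁻¹ * (κmin * ‖g‖) := by
        rw [← mul_assoc, inv_mul_cancel₀ hκmin.ne', one_mul]
    _ ≤ κmin⁻¹ * ((L * dmax + (γ + 2) * c * εf * dmin⁻¹) * m) :=
        mul_le_mul_of_nonneg_left hcancel (inv_nonneg.mpr hκmin.le)
    _ = κmin⁻¹ * (L * dmax + (γ + 2) * c * εf * dmin⁻¹) * m := by ring
end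

section
/- Let γ > 2, p > 1, c > 0, ε_f > 0, ν ∈ (0,1) with ν/(1-ν) ≥ 2(τ^{-p}-1)/(γ-2), τ ∈ (0,1), and f_min ≤ f. Consider Φ = (ν/(cε_f))(f(x) - f_min) + (1-ν)δ^p and Φ' = (ν/(cε_f))(f(x') - f_min) + (1-ν)(δ')^p. If f(x') - f(x) ≤ -(γ-2)cε_f δ^p and (δ')^p ≤ τ^{-p} δ^p, then Φ' - Φ ≤ -(1/2) ν (γ-2) δ^p. -/
theorem stmt_17 (γ p c εf ν τ : ℝ) (hγ : 2 < γ) (hp : 1 < p) (hc : 0 < c)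
    (hεf : 0 < εf) (hν0 : 0 < ν) (hν1 : ν < 1)
    (hν : ν / (1 - ν) ≥ 2 * (τ ^ (-p) - 1) / (γ - 2))
    (hτ0 : 0 < τ) (hτ1 : τ < 1)
    (fmin fx fx' δ δ' : ℝ) (hδ : 0 < δ) (hδ' : 0 ≤ δ')
    (hfmin : fmin ≤ fx) (hfmin' : fmin ≤ fx')
    (hdec : fx' - fx ≤ -(γ - 2) * c * εf * δ ^ p)
    (hstep : δ' ^ p ≤ τ ^ (-p) * δ ^ p) :
    (ν / (c * εf) * (fx' - fmin) + (1 - ν) * δ' ^ p) -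
      (ν / (c * εf) * (fx - fmin) + (1 - ν) * δ ^ p) ≤
      -(1 / 2) * ν * (γ - 2) * δ ^ p := by
  have hce : 0 < c * εf := mul_pos hc hεf
  have hδp : 0 < δ ^ p := Real.rpow_pos_of_pos hδ p
  have h1 : ν / (c * εf) * (fx' - fx) ≤ -(γ - 2) * ν * δ ^ p := by
    calc ν / (c * εf) * (fx' - fx)
        ≤ ν / (c * εf) * (-(γ - 2) * c * εf * δ ^ p) :=
          mul_le_mul_of_nonneg_left hdec (le_of_lt (div_pos hν0 hce))
      _ = -(γ - 2) * ν * δ ^ p := by field_simp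
  have h2 : 2 * (τ ^ (-p) - 1) * (1 - ν) ≤ ν * (γ - 2) := by
    rw [ge_iff_le, div_le_div_iff₀ (by linarith) (by linarith)] at hν
    linarith
  have h3 : (1 - ν) * δ' ^ p ≤ (1 - ν) * (τ ^ (-p) * δ ^ p) :=
    mul_le_mul_of_nonneg_left hstep (by linarith)
  nlinarith [mul_le_mul_of_nonneg_right h2 hδp.le]
end
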